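/- Let F = BV(v) be the class of functions f : [0,1] → ℝ with total variation at most v, and let t < v. Then the t-fat-shattering dimension of the dual class F* satisfies d*_F(t) ≤ 2·log₂(v/t). -/

import Mathlib

/-- `f` has total variation at most `v` on `[0,1]`: over every finite monotone
sequence of points of `[0,1]`, the sum of absolute increments is at most `v`. -/
def VarLe (f : ℝ → ℝ) (v : ℝ) : Prop :=
  ∀ (k : ℕ) (x : Fin (k + 1) → ℝ), Monotone x → (∀ j, x j ∈ Set.Icc (0 : ℝ) 1) →
    ∑ j : Fin k, |f (x j.succ) - f (x j.castSucc)| ≤ v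

/-- The class BV(v) of functions `[0,1] → ℝ` of total variation at most `v`. -/
def BV (v : ℝ) : Set (ℝ → ℝ) := {f | VarLe f v}

/-- A set of `n` (distinct) functions of `F` is `t`-shattered by the dual class
`F*` (whose elements are evaluation points in `[0,1]`). -/
def DualShattered (F : Set (ℝ → ℝ)) (t : ℝ) (n : ℕ) : Prop :=
  ∃ f : Fin n → ℝ → ℝ, (∀ i, f i ∈ F) ∧ Function.Injective f ∧
    ∃ r : Fin n → ℝ, ∀ b : Fin n → Bool, ∃ x ∈ Set.Icc (0 : ℝ) 1,
      ∀ i, (b i = true → r i + t ≤ f i x) ∧ (b i = false → f i x ≤ r i - t)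

lemma auxR (n : ℕ) (hn : 1 ≤ n) :
    ((n : ℝ)) ^ 2 * 2 ^ n ≤ (2 * ((2 : ℝ) ^ n - 1)) ^ 2 := by
  induction n with
  | zero => omega
  | succ m ih =>
    rcases Nat.lt_or_ge m 3 with hm | hm
    · interval_cases m <;> norm_num
    · have h1 := ih (by omega)
      have h2 : (8 : ℝ) ≤ 2 ^ m := by
        calc (8 : ℝ) = 2 ^ 3 := by norm_num
        _ ≤ 2 ^ m := by exact pow_le_pow_right₀ (by norm_num) hm
      have h3 : (3 : ℝ) ≤ (m : ℝ) := by exact_mod_cast hm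
      push_cast
      ring_nf
      ring_nf at h1
      nlinarith [sq_nonneg ((m : ℝ) - 3), sq_nonneg ((2:ℝ)^m - 1),
        mul_pos (by positivity : (0:ℝ) < (m:ℝ)^2) (by positivity : (0:ℝ) < (2:ℝ)^m)]

/-- for F = BV(v) and t < v, the dual t-fat-shattering dimension is
at most 2·log₂(v/t). -/
theorem stmt3 (v t : ℝ) (ht : 0 < t) (htv : t < v) (n : ℕ)
    (h : DualShattered (BV v) t n) : (n : ℝ) ≤ 2 * Real.logb 2 (v / t) := by
  have hvt1 : (1 : ℝ) ≤ v / t := (one_le_div ht).mpr htv.le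
  rcases Nat.eq_zero_or_pos n with hn | hn
  · subst hn
    have h0 : (0 : ℝ) ≤ 2 * Real.logb 2 (v / t) :=
      mul_nonneg (by norm_num) (Real.logb_nonneg (by norm_num) hvt1)
    simpa using h0
  obtain ⟨f, hfF, -, r, hx⟩ := h
  choose x hIcc hprop using hx
  -- the chosen points are pairwise distinct
  have hxinj : Function.Injective x := by
    intro b b' hbb'
    by_contra hne
    obtain ⟨i, hi⟩ := Function.ne_iff.mp hne
    cases hb : b i <;> cases hb' : b' i
    · exact hi (hb.trans hb'.symm)
    · have h1 := (hprop b i).2 hb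
      have h2 := (hprop b' i).1 hb'
      rw [hbb'] at h1; linarith
    · have h1 := (hprop b i).1 hb
      have h2 := (hprop b' i).2 hb'
      rw [hbb'] at h1; linarith
    · exact hi (hb.trans hb'.symm)
  classical
  set s : Finset ℝ := Finset.image x Finset.univ with hs
  set k : ℕ := 2 ^ n - 1 with hkdef
  have hk : 2 ^ n = k + 1 := (Nat.succ_pred_eq_of_pos (Nat.pow_pos (by norm_num))).symm
  have hcard : s.card = k + 1 := by
    rw [hs, Finset.card_image_of_injective _ hxinj, Finset.card_univ, ← hk]
    simp
  set y : Fin (k + 1) → ℝ := fun j => s.orderEmbOfFin hcard j with hy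
  have hymono : StrictMono y := (s.orderEmbOfFin hcard).strictMono
  have hmem : ∀ j : Fin (k + 1), ∃ b, x b = y j := by
    intro j
    have h0 : y j ∈ s := Finset.orderEmbOfFin_mem s hcard j
    rw [hs, Finset.mem_image] at h0
    obtain ⟨b, -, hb⟩ := h0
    exact ⟨b, hb⟩
  choose p hp using hmem
  have hyIcc : ∀ j, y j ∈ Set.Icc (0 : ℝ) 1 := fun j => (hp j) ▸ hIcc (p j)
  -- key: a coordinate flip between consecutive points costs 2t of variation
  have key : ∀ (j : Fin k) (i : Fin n), p j.castSucc i ≠ p j.succ i →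
      2 * t ≤ |f i (y j.succ) - f i (y j.castSucc)| := by
    intro j i hne
    have hc := hprop (p j.castSucc) i
    have hsu := hprop (p j.succ) i
    rw [hp] at hc hsu
    cases hb : p j.castSucc i <;> cases hb' : p j.succ i
    · exact absurd (hb.trans hb'.symm) hne
    · have h1 := hc.2 hb
      have h2 := hsu.1 hb'
      calc 2 * t ≤ f i (y j.succ) - f i (y j.castSucc) := by linarith
      _ ≤ |f i (y j.succ) - f i (y j.castSucc)| := le_abs_self _
    · have h1 := hc.1 hb
      have h2 := hsu.2 hb'
      rw [abs_sub_comm]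
      calc 2 * t ≤ f i (y j.castSucc) - f i (y j.succ) := by linarith
      _ ≤ |f i (y j.castSucc) - f i (y j.succ)| := le_abs_self _
    · exact absurd (hb.trans hb'.symm) hne
  have hvar : ∀ i : Fin n, ∑ j : Fin k, |f i (y j.succ) - f i (y j.castSucc)| ≤ v :=
    fun i => hfF i k y hymono.monotone hyIcc
  have main : (k : ℝ) * (2 * t) ≤ (n : ℝ) * v := by
    calc (k : ℝ) * (2 * t) = ∑ _j : Fin k, (2 * t) := by
          simp [Finset.sum_const, mul_comm]
    _ ≤ ∑ j : Fin k, ∑ i : Fin n,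
          (if p j.castSucc i ≠ p j.succ i then 2 * t else 0) := by
        apply Finset.sum_le_sum
        intro j _
        have hdiff : p j.castSucc ≠ p j.succ := by
          intro hEq
          have hyy : y j.castSucc = y j.succ := by
            rw [← hp, ← hp, hEq]
          exact (hymono (Fin.castSucc_lt_succ : j.castSucc < j.succ)).ne hyy
        obtain ⟨i, hi⟩ := Function.ne_iff.mp hdiff
        have hle := Finset.single_le_sum
          (f := fun i => if p j.castSucc i ≠ p j.succ i then 2 * t else 0)
          (fun i _ => by split <;> linarith) (Finset.mem_univ i)
        simpa [hi] using hle
    _ = ∑ i : Fin n, ∑ j : Fin k,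
          (if p j.castSucc i ≠ p j.succ i then 2 * t else 0) := Finset.sum_comm
    _ ≤ ∑ i : Fin n, ∑ j : Fin k, |f i (y j.succ) - f i (y j.castSucc)| := by
        apply Finset.sum_le_sum
        intro i _
        apply Finset.sum_le_sum
        intro j _
        split
        · exact key j i (by assumption)
        · exact abs_nonneg _
    _ ≤ ∑ _i : Fin n, v := Finset.sum_le_sum fun i _ => hvar i
    _ = (n : ℝ) * v := by simp [mul_comm]
  have hkR : (k : ℝ) = 2 ^ n - 1 := by
    have h0 : ((2 : ℝ)) ^ n = (k : ℝ) + 1 := by exact_mod_cast hk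
    linarith
  -- numeric conclusion
  have hnR : (1 : ℝ) ≤ (n : ℝ) := by exact_mod_cast hn
  have hvtpos : (0 : ℝ) < v / t := lt_of_lt_of_le one_pos hvt1
  have h1n : (1 : ℝ) ≤ (2 : ℝ) ^ n := one_le_pow₀ (by norm_num)
  have hstep : 2 * ((2 : ℝ) ^ n - 1) ≤ (n : ℝ) * (v / t) := by
    have hrw : (n : ℝ) * (v / t) = (n : ℝ) * v / t := by ring
    rw [hrw, le_div_iff₀ ht]
    calc 2 * ((2 : ℝ) ^ n - 1) * t = (2 ^ n - 1) * (2 * t) := by ring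
    _ ≤ (n : ℝ) * v := by rw [← hkR]; exact main
  have h2 : (2 : ℝ) ^ n ≤ (v / t) ^ 2 := by
    have haux := auxR n hn
    have hA : (0 : ℝ) ≤ 2 * ((2 : ℝ) ^ n - 1) := by linarith
    have hsq : (2 * ((2 : ℝ) ^ n - 1)) ^ 2 ≤ ((n : ℝ) * (v / t)) ^ 2 := by
      apply pow_le_pow_left₀ hA hstep
    have hfin : ((n : ℝ)) ^ 2 * 2 ^ n ≤ ((n : ℝ)) ^ 2 * (v / t) ^ 2 := by
      calc ((n : ℝ)) ^ 2 * 2 ^ n ≤ (2 * ((2 : ℝ) ^ n - 1)) ^ 2 := haux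
      _ ≤ ((n : ℝ) * (v / t)) ^ 2 := hsq
      _ = ((n : ℝ)) ^ 2 * (v / t) ^ 2 := by ring
    have hn2 : (0 : ℝ) < ((n : ℝ)) ^ 2 := by positivity
    exact le_of_mul_le_mul_left hfin hn2
  calc (n : ℝ) = Real.logb 2 ((2 : ℝ) ^ n) := by
        rw [Real.logb_pow, Real.logb_self_eq_one (by norm_num)]
        ring
  _ ≤ Real.logb 2 ((v / t) ^ 2) :=
      Real.logb_le_logb_of_le (by norm_num) (by positivity) h2
  _ = 2 * Real.logb 2 (v / t) := by rw [Real.logb_pow]; push_cast; ring
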